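/- arXiv:2005.04123 — 3 statements merged into one kernel-verified Lean document; each statement's English description precedes it below -/
import Mathlib

section
/- For a propositional variable x and CNF formula A, the formula obtained from A by removing all clauses containing x or ¬x and adding all non-tautological resolvents of a clause of A containing x with a clause of A containing ¬x expresses forgetting x from A. -/
abbrev Lit : Type := ℕ × Bool
abbrev Clause : Type := Finset Lit
abbrev Cnf : Type := Finset Clause

def Lit.negate (l : Lit) : Lit := (l.1, !l.2)

def litSat (M : ℕ → Bool) (l : Lit) : Prop := M l.1 = l.2

def clauseSat (M : ℕ → Bool) (c : Clause) : Prop := ∃ l ∈ c, litSat M l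

def cnfSat (M : ℕ → Bool) (F : Cnf) : Prop := ∀ c ∈ F, clauseSat M c

def ClTaut (c : Clause) : Prop := ∃ v : ℕ, (v, true) ∈ c ∧ (v, false) ∈ c

def cnfVars (F : Cnf) : Set ℕ := {v | ∃ c ∈ F, ∃ b, (v, b) ∈ c}

def isResolvent (c1 c2 r : Clause) (v : ℕ) : Prop :=
  (v, true) ∈ c1 ∧ (v, false) ∈ c2 ∧
    r = c1.erase (v, true) ∪ c2.erase (v, false)

inductive PropForm : Type
  | tru : PropForm
  | fls : PropForm
  | var : ℕ → PropForm
  | neg : PropForm → PropForm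
  | conj : PropForm → PropForm → PropForm
  | disj : PropForm → PropForm → PropForm

def PropForm.eval (M : ℕ → Bool) : PropForm → Bool
  | .tru => true
  | .fls => false
  | .var n => M n
  | .neg φ => !(PropForm.eval M φ)
  | .conj φ ψ => PropForm.eval M φ && PropForm.eval M ψ
  | .disj φ ψ => PropForm.eval M φ || PropForm.eval M ψ

def PropForm.vars : PropForm → Set ℕ
  | .tru => ∅
  | .fls => ∅
  | .var n => {n}
  | .neg φ => PropForm.vars φ
  | .conj φ ψ => PropForm.vars φ ∪ PropForm.vars ψ
  | .disj φ ψ => PropForm.vars φ ∪ PropForm.vars ψ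

def entailsForm (A : Cnf) (φ : PropForm) : Prop :=
  ∀ M, cnfSat M A → PropForm.eval M φ = true

/-- `B` expresses forgetting all variables but `Y` from `A`. -/
def ForgetExpr (A : Cnf) (Y : Set ℕ) (B : Cnf) : Prop :=
  cnfVars B ⊆ Y ∧
    ∀ φ : PropForm, PropForm.vars φ ⊆ Y → (entailsForm A φ ↔ entailsForm B φ)

def litSetSat (M : ℕ → Bool) (S : Set Lit) : Prop := ∀ l ∈ S, litSat M l


lemma eval_congr (φ : PropForm) (M M' : ℕ → Bool)
    (h : ∀ v ∈ φ.vars, M v = M' v) : φ.eval M = φ.eval M' := by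
  induction φ with
  | tru => rfl
  | fls => rfl
  | var n => exact h n rfl
  | neg ψ ih => simp only [PropForm.eval]; rw [ih h]
  | conj ψ χ ih1 ih2 =>
      simp only [PropForm.eval]
      rw [ih1 (fun v hv => h v (Set.mem_union_left _ hv)),
          ih2 (fun v hv => h v (Set.mem_union_right _ hv))]
  | disj ψ χ ih1 ih2 =>
      simp only [PropForm.eval]
      rw [ih1 (fun v hv => h v (Set.mem_union_left _ hv)),
          ih2 (fun v hv => h v (Set.mem_union_right _ hv))]

lemma litSat_update (M : ℕ → Bool) (x : ℕ) (b : Bool) (l : Lit) (h : l.1 ≠ x) :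
    litSat (Function.update M x b) l ↔ litSat M l := by
  simp [litSat, Function.update_of_ne h]

/-- The formula obtained from `A` by dropping all clauses mentioning `x` and
adding all non-tautological resolvents on `x` expresses forgetting `x`
from `A`. -/
theorem stmt6 (A B : Cnf) (x : ℕ)
    (hA : ∀ c ∈ A, ¬ ClTaut c)
    (hB : (↑B : Set Clause) =
      ((↑A : Set Clause) \ {c : Clause | (x, true) ∈ c ∨ (x, false) ∈ c}) ∪
        {r : Clause | ∃ c1 ∈ A, ∃ c2 ∈ A, isResolvent c1 c2 r x ∧ ¬ ClTaut r}) :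
    ForgetExpr A (cnfVars A \ {x}) B := by
  -- every model of A satisfies B
  have hAB : ∀ M, cnfSat M A → cnfSat M B := by
    intro M hM c hc
    have hc' : c ∈ (↑B : Set Clause) := hc
    rw [hB] at hc'
    rcases hc' with ⟨hcA, _⟩ | ⟨c1, hc1, c2, hc2, ⟨h1, h2, hr⟩, _⟩
    · exact hM c hcA
    · obtain ⟨l, hl, hls⟩ := hM c1 hc1
      by_cases hlx : l = (x, true)
      · obtain ⟨l', hl', hls'⟩ := hM c2 hc2
        have hne : l' ≠ (x, false) := by
          rintro rfl
          subst hlx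
          simp only [litSat] at hls hls'
          rw [hls] at hls'
          exact Bool.noConfusion hls'
        subst hr
        exact ⟨l', Finset.mem_union_right _ (Finset.mem_erase.mpr ⟨hne, hl'⟩), hls'⟩
      · subst hr
        exact ⟨l, Finset.mem_union_left _ (Finset.mem_erase.mpr ⟨hlx, hl⟩), hls⟩
  -- key: a model of B extends to a model of A by choosing a value for x
  have key : ∀ M, cnfSat M B → ∃ b, cnfSat (Function.update M x b) A := by
    intro M hM
    by_cases h1 : cnfSat (Function.update M x true) A
    · exact ⟨true, h1⟩
    · refine ⟨false, ?_⟩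
      simp only [cnfSat, not_forall] at h1
      obtain ⟨c1, hc1A, hc1⟩ := h1
      -- c1 contains (x, false)
      have hxc1 : (x, false) ∈ c1 := by
        by_contra hxf
        have hxt : (x, true) ∉ c1 := by
          intro hxt
          exact hc1 ⟨(x, true), hxt, by simp [litSat]⟩
        have hc1B : c1 ∈ B := by
          have : c1 ∈ (↑B : Set Clause) := by
            rw [hB]; exact Or.inl ⟨hc1A, by simp [hxt, hxf]⟩
          exact this
        obtain ⟨l, hl, hls⟩ := hM c1 hc1B
        have hlx : l.1 ≠ x := by
          intro h
          rcases l with ⟨v, b⟩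
          cases b <;> simp_all
        exact hc1 ⟨l, hl, (litSat_update M x true l hlx).mpr hls⟩
      -- all literals of c1 other than (x,false) are falsified by M and avoid x
      have hfalse : ∀ l ∈ c1, l ≠ (x, false) → l.1 ≠ x ∧ ¬ litSat M l := by
        intro l hl hne
        have hlx : l.1 ≠ x := by
          intro h
          rcases l with ⟨v, b⟩
          cases b
          · simp_all
          · exact hA c1 hc1A ⟨x, by simp_all, hxc1⟩
        refine ⟨hlx, fun hls => ?_⟩
        exact hc1 ⟨l, hl, (litSat_update M x true l hlx).mpr hls⟩
      intro c hcA
      by_cases hcf : (x, false) ∈ c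
      · exact ⟨(x, false), hcf, by simp [litSat]⟩
      by_cases hct : (x, true) ∈ c
      · -- resolvent of c and c1
        set r : Clause := c.erase (x, true) ∪ c1.erase (x, false) with hrdef
        by_cases hrt : ClTaut r
        · obtain ⟨v, hv1, hv2⟩ := hrt
          have hvx : v ≠ x := by
            rintro rfl
            rcases Finset.mem_union.mp hv1 with h | h
            · exact absurd (Finset.mem_erase.mp h).1 (by simp)
            · exact hA c1 hc1A ⟨_, (Finset.mem_erase.mp h).2, hxc1⟩
          set l : Lit := (v, M v) with hldef
          have hlr : l ∈ r := by cases hMv : M v <;> simp_all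
          have hlsat : litSat M l := rfl
          rcases Finset.mem_union.mp hlr with h | h
          · obtain ⟨hne, hlc⟩ := Finset.mem_erase.mp h
            exact ⟨l, hlc, (litSat_update M x false l hvx).mpr hlsat⟩
          · obtain ⟨hne, hlc⟩ := Finset.mem_erase.mp h
            exact absurd hlsat (hfalse l hlc hne).2
        · have hrB : r ∈ B := by
            have : r ∈ (↑B : Set Clause) := by
              rw [hB]
              exact Or.inr ⟨c, hcA, c1, hc1A, ⟨hct, hxc1, hrdef⟩, hrt⟩
            exact this
          obtain ⟨l, hl, hls⟩ := hM r hrB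
          rcases Finset.mem_union.mp hl with h | h
          · obtain ⟨hne, hlc⟩ := Finset.mem_erase.mp h
            have hlx : l.1 ≠ x := by
              intro hx
              rcases l with ⟨v, b⟩
              cases b
              · exact hcf (by simp_all)
              · exact hne (by simp_all)
            exact ⟨l, hlc, (litSat_update M x false l hlx).mpr hls⟩
          · obtain ⟨hne, hlc⟩ := Finset.mem_erase.mp h
            exact absurd hls (hfalse l hlc hne).2
      · -- c mentions no x literal
        have hcB : c ∈ B := by
          have : c ∈ (↑B : Set Clause) := by
            rw [hB]; exact Or.inl ⟨hcA, by simp [hct, hcf]⟩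
          exact this
        obtain ⟨l, hl, hls⟩ := hM c hcB
        have hlx : l.1 ≠ x := by
          intro h
          rcases l with ⟨v, b⟩
          cases b
          · exact hcf (by simp_all)
          · exact hct (by simp_all)
        exact ⟨l, hl, (litSat_update M x false l hlx).mpr hls⟩
  constructor
  · -- variables of B
    rintro v ⟨c, hcB, b, hvb⟩
    have hc' : c ∈ (↑B : Set Clause) := hcB
    rw [hB] at hc'
    rcases hc' with ⟨hcA, hcx⟩ | ⟨c1, hc1, c2, hc2, ⟨h1, h2, hr⟩, _⟩
    · refine ⟨⟨c, hcA, b, hvb⟩, ?_⟩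
      rintro rfl
      exact hcx (by cases b
                    · exact Or.inr hvb
                    · exact Or.inl hvb)
    · subst hr
      rcases Finset.mem_union.mp hvb with h | h
      · obtain ⟨hne, hlc⟩ := Finset.mem_erase.mp h
        refine ⟨⟨c1, hc1, b, hlc⟩, ?_⟩
        rintro rfl
        cases b
        · exact hA c1 hc1 ⟨_, h1, hlc⟩
        · exact hne rfl
      · obtain ⟨hne, hlc⟩ := Finset.mem_erase.mp h
        refine ⟨⟨c2, hc2, b, hlc⟩, ?_⟩
        rintro rfl
        cases b
        · exact hne rfl
        · exact hA c2 hc2 ⟨_, hlc, h2⟩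
  · intro φ hφ
    have hxφ : x ∉ φ.vars := fun h => (hφ h).2 rfl
    constructor
    · intro hAφ M hMB
      obtain ⟨b, hMA⟩ := key M hMB
      have := hAφ _ hMA
      rwa [eval_congr φ (Function.update M x b) M
        (fun v hv => Function.update_of_ne (by rintro rfl; exact hxφ hv) _ _)] at this
    · intro hBφ M hMA
      exact hBφ M (hAB M hMA)
end

section
/- If S is a set of literals over the variables Y such that S ∪ A is satisfiable but (S \ {l}) ∪ {¬l} ∪ A is unsatisfiable, then every CNF formula that expresses forgetting all variables but Y from A contains a clause containing the literal l. -/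
def litForm (m : Lit) : PropForm := if m.2 then .var m.1 else .neg (.var m.1)

lemma litForm_eval (M : ℕ → Bool) (m : Lit) :
    PropForm.eval M (litForm m) = true ↔ litSat M m := by
  rcases m with ⟨v, b⟩
  cases b <;> simp [litForm, litSat, PropForm.eval]

lemma litForm_vars (m : Lit) : PropForm.vars (litForm m) = {m.1} := by
  rcases m with ⟨v, b⟩
  cases b <;> simp [litForm, PropForm.vars]

def conjList : List PropForm → PropForm
  | [] => .tru
  | φ :: rest => .conj φ (conjList rest)

lemma conjList_eval (M : ℕ → Bool) (L : List PropForm) :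
    PropForm.eval M (conjList L) = true ↔ ∀ φ ∈ L, PropForm.eval M φ = true := by
  induction L with
  | nil => simp [conjList, PropForm.eval]
  | cons φ rest ih => simp [conjList, PropForm.eval, ih]

lemma conjList_vars (L : List PropForm) (v : ℕ) (hv : v ∈ PropForm.vars (conjList L)) :
    ∃ φ ∈ L, v ∈ PropForm.vars φ := by
  induction L with
  | nil => simp [conjList, PropForm.vars] at hv
  | cons φ rest ih =>
    simp only [conjList, PropForm.vars, Set.mem_union] at hv
    rcases hv with h | h
    · exact ⟨φ, by simp, h⟩
    · obtain ⟨ψ, hψ, hvψ⟩ := ih h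
      exact ⟨ψ, by simp [hψ], hvψ⟩

def disjList : List PropForm → PropForm
  | [] => .fls
  | φ :: rest => .disj φ (disjList rest)

lemma disjList_eval (M : ℕ → Bool) (L : List PropForm) :
    PropForm.eval M (disjList L) = true ↔ ∃ φ ∈ L, PropForm.eval M φ = true := by
  induction L with
  | nil => simp [disjList, PropForm.eval]
  | cons φ rest ih => simp [disjList, PropForm.eval, ih]

lemma disjList_vars (L : List PropForm) (v : ℕ) (hv : v ∈ PropForm.vars (disjList L)) :
    ∃ φ ∈ L, v ∈ PropForm.vars φ := by
  induction L with
  | nil => simp [disjList, PropForm.vars] at hv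
  | cons φ rest ih =>
    simp only [disjList, PropForm.vars, Set.mem_union] at hv
    rcases hv with h | h
    · exact ⟨φ, by simp, h⟩
    · obtain ⟨ψ, hψ, hvψ⟩ := ih h
      exact ⟨ψ, by simp [hψ], hvψ⟩

noncomputable def clauseForm (c : Clause) : PropForm := disjList (c.toList.map litForm)

lemma clauseForm_eval (M : ℕ → Bool) (c : Clause) :
    PropForm.eval M (clauseForm c) = true ↔ clauseSat M c := by
  simp only [clauseForm, disjList_eval, List.mem_map, clauseSat]
  constructor
  · rintro ⟨φ, ⟨m, hm, rfl⟩, h⟩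
    exact ⟨m, Finset.mem_toList.mp hm, (litForm_eval M m).mp h⟩
  · rintro ⟨m, hm, h⟩
    exact ⟨litForm m, ⟨m, Finset.mem_toList.mpr hm, rfl⟩, (litForm_eval M m).mpr h⟩

lemma clauseForm_vars (c : Clause) (v : ℕ) (hv : v ∈ PropForm.vars (clauseForm c)) :
    ∃ b, (v, b) ∈ c := by
  obtain ⟨φ, hφ, hvφ⟩ := disjList_vars _ v hv
  obtain ⟨m, hm, rfl⟩ := List.mem_map.mp hφ
  rw [litForm_vars] at hvφ
  rcases m with ⟨u, b⟩
  simp only [Set.mem_singleton_iff] at hvφ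
  subst hvφ
  exact ⟨b, Finset.mem_toList.mp hm⟩

/-- If `S` is a set of literals over `Y` with `S ∪ A` satisfiable but
`(S \ {l}) ∪ {¬l} ∪ A` unsatisfiable, every formula expressing forgetting all
variables but `Y` from `A` contains a clause containing `l`. -/
theorem stmt9 (A : Cnf) (Y : Set ℕ) (S : Set Lit) (l : Lit)
    (hSY : ∀ m ∈ S, m.1 ∈ Y) (hl : l ∈ S)
    (hsat : ∃ M, litSetSat M S ∧ cnfSat M A)
    (hunsat : ¬ ∃ M, litSetSat M ((S \ {l}) ∪ {Lit.negate l}) ∧ cnfSat M A) :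
    ∀ B : Cnf, ForgetExpr A Y B → ∃ c ∈ B, l ∈ c := by
  classical
  intro B hB
  by_contra hcon
  push_neg at hcon
  obtain ⟨hBY, hiff⟩ := hB
  obtain ⟨M, hMS, hMA⟩ := hsat
  have hMl : M l.1 = l.2 := hMS l hl
  -- M satisfies B
  have hMB : cnfSat M B := by
    intro c hc
    have hvars : PropForm.vars (clauseForm c) ⊆ Y := by
      intro v hv
      obtain ⟨b, hb⟩ := clauseForm_vars c v hv
      exact hBY ⟨c, hc, b, hb⟩
    have hBent : entailsForm B (clauseForm c) := by
      intro N hN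
      exact (clauseForm_eval N c).mpr (hN c hc)
    have hAent : entailsForm A (clauseForm c) := (hiff _ hvars).mpr hBent
    exact (clauseForm_eval M c).mp (hAent M hMA)
  -- flipped model
  set M' : ℕ → Bool := Function.update M l.1 (!l.2) with hM'def
  have hM'l : M' l.1 = !l.2 := by simp [hM'def]
  have hM'ne : ∀ v, v ≠ l.1 → M' v = M v := by
    intro v hv; simp [hM'def, Function.update_of_ne hv]
  -- M' satisfies B
  have hM'B : cnfSat M' B := by
    intro c hc
    obtain ⟨m, hm, hsatm⟩ := hMB c hc
    refine ⟨m, hm, ?_⟩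
    by_cases hvm : m.1 = l.1
    · exfalso
      have : m = l := by
        have : m.2 = l.2 := by rw [← hMl, ← hvm, hsatm]
        exact Prod.ext hvm this
      exact hcon c hc (this ▸ hm)
    · rwa [litSat, hM'ne m.1 hvm]
  -- M' satisfies (S \ {l}) ∪ {¬l}
  have hM'S : litSetSat M' ((S \ {l}) ∪ {Lit.negate l}) := by
    intro m hm
    rcases hm with ⟨hmS, hml⟩ | hm
    · have hvm : m.1 ≠ l.1 := by
        intro h
        apply hml
        have h2 : M m.1 = m.2 := hMS m hmS
        have : m.2 = l.2 := by rw [← h2, h, hMl]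
        exact Prod.ext h this
      show M' m.1 = m.2
      rw [hM'ne m.1 hvm]
      exact hMS m hmS
    · simp only [Set.mem_singleton_iff] at hm
      subst hm
      exact hM'l
  -- the finite variable set of A
  set W : Finset ℕ := A.biUnion (fun c => c.image Prod.fst) with hWdef
  set ψ : PropForm :=
    conjList (W.toList.map (fun v => if v ∈ Y then litForm (v, M' v) else .tru)) with hψdef
  have hψvars : PropForm.vars (PropForm.neg ψ) ⊆ Y := by
    intro v hv
    obtain ⟨φ, hφ, hvφ⟩ := conjList_vars _ v hv
    obtain ⟨u, _, rfl⟩ := List.mem_map.mp hφ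
    by_cases hu : u ∈ Y
    · rw [if_pos hu, litForm_vars] at hvφ
      simp only [Set.mem_singleton_iff] at hvφ
      exact hvφ ▸ hu
    · rw [if_neg hu] at hvφ
      simp [PropForm.vars] at hvφ
  have hM'ψ : PropForm.eval M' ψ = true := by
    rw [hψdef, conjList_eval]
    intro φ hφ
    obtain ⟨u, _, rfl⟩ := List.mem_map.mp hφ
    by_cases hu : u ∈ Y
    · rw [if_pos hu]
      exact (litForm_eval M' (u, M' u)).mpr rfl
    · rw [if_neg hu]; rfl
  have hnotB : ¬ entailsForm B (PropForm.neg ψ) := by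
    intro h
    have := h M' hM'B
    simp only [PropForm.eval, hM'ψ] at this
    exact absurd this (by simp)
  have hnotA : ¬ entailsForm A (PropForm.neg ψ) := fun h => hnotB ((hiff _ hψvars).mp h)
  rw [entailsForm] at hnotA
  push_neg at hnotA
  obtain ⟨M'', hM''A, hM''ψ⟩ := hnotA
  have hψtrue : PropForm.eval M'' ψ = true := by
    simp only [PropForm.eval] at hM''ψ
    cases h : PropForm.eval M'' ψ
    · rw [h] at hM''ψ; simp at hM''ψ
    · rfl
  have hagree : ∀ v ∈ W, v ∈ Y → M'' v = M' v := by
    intro v hvW hvY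
    rw [hψdef, conjList_eval] at hψtrue
    have := hψtrue (if v ∈ Y then litForm (v, M' v) else .tru)
      (List.mem_map.mpr ⟨v, Finset.mem_toList.mpr hvW, rfl⟩)
    rw [if_pos hvY] at this
    exact (litForm_eval M'' (v, M' v)).mp this
  -- combined model
  set N : ℕ → Bool := fun v => if v ∈ Y then M' v else M'' v with hNdef
  apply hunsat
  refine ⟨N, ?_, ?_⟩
  · intro m hm
    have hmY : m.1 ∈ Y := by
      rcases hm with ⟨hmS, _⟩ | hm
      · exact hSY m hmS
      · simp only [Set.mem_singleton_iff] at hm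
        subst hm
        exact hSY l hl
    have := hM'S m hm
    show (if m.1 ∈ Y then M' m.1 else M'' m.1) = m.2
    rw [if_pos hmY]
    exact this
  · intro c hc
    obtain ⟨m, hm, hsatm⟩ := hM''A c hc
    refine ⟨m, hm, ?_⟩
    have hmW : m.1 ∈ W := by
      rw [hWdef]
      exact Finset.mem_biUnion.mpr ⟨c, hc, Finset.mem_image.mpr ⟨m, hm, rfl⟩⟩
    show (if m.1 ∈ Y then M' m.1 else M'' m.1) = m.2
    by_cases hmY : m.1 ∈ Y
    · rw [if_pos hmY, ← hagree m.1 hmW hmY]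
      exact hsatm
    · rw [if_neg hmY]
      exact hsatm
end

section
/- If the literal ¬l does not occur in any clause of F and l ∉ F, then the unit clause {l} is superredundant in F ∪ {l} if and only if F ⊨ l. -/
inductive Deriv (F : Set Clause) : Clause → Prop
  | base {c : Clause} : c ∈ F → Deriv F c
  | step {c1 c2 r : Clause} {v : ℕ} : Deriv F c1 → Deriv F c2 →
      isResolvent c1 c2 r v → ¬ ClTaut r → Deriv F r

def ResCn (F : Set Clause) : Set Clause := {c | Deriv F c}

def setSat (M : ℕ → Bool) (S : Set Clause) : Prop := ∀ c ∈ S, clauseSat M c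

def setEntails (S : Set Clause) (c : Clause) : Prop :=
  ∀ M, setSat M S → clauseSat M c

def superRedundant (F : Cnf) (c : Clause) : Prop :=
  setEntails (ResCn ↑F \ {c}) c

def cnfSize (F : Cnf) : ℕ := ∑ c ∈ F, c.card

def cnfEquiv (F G : Cnf) : Prop := ∀ M, cnfSat M F ↔ cnfSat M G

lemma deriv_noNeg {S : Set Clause} {l : Lit} (h : ∀ c ∈ S, Lit.negate l ∉ c)
    {c : Clause} (hd : Deriv S c) : Lit.negate l ∉ c := by
  induction hd with
  | base hc => exact h _ hc
  | step _ _ hres _ ih1 ih2 =>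
    obtain ⟨h1, h2, hr⟩ := hres
    subst hr
    intro hm
    rcases Finset.mem_union.mp hm with hm | hm
    · exact ih1 (Finset.mem_of_mem_erase hm)
    · exact ih2 (Finset.mem_of_mem_erase hm)

lemma deriv_sound {S : Set Clause} {M : ℕ → Bool} (hM : setSat M S)
    {c : Clause} (hd : Deriv S c) : clauseSat M c := by
  induction hd with
  | @step c1 c2 r v _ _ hres _ ih1 ih2 =>
    obtain ⟨h1, h2, hr⟩ := hres
    subst hr
    by_cases hv : M v = true
    · obtain ⟨m, hm, hms⟩ := ih2
      refine ⟨m, Finset.mem_union_right _ (Finset.mem_erase.mpr ⟨?_, hm⟩), hms⟩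
      rintro rfl
      simp [litSat, hv] at hms
    · obtain ⟨m, hm, hms⟩ := ih1
      refine ⟨m, Finset.mem_union_left _ (Finset.mem_erase.mpr ⟨?_, hm⟩), hms⟩
      rintro rfl
      simp [litSat] at hms
      exact hv hms
  | base hc => exact hM _ hc

lemma deriv_split {F : Cnf} {l : Lit} (hneg : ∀ c ∈ F, Lit.negate l ∉ c)
    {c : Clause} (hd : Deriv (insert ({l} : Clause) (↑F : Set Clause)) c) :
    c = {l} ∨ Deriv (↑F : Set Clause) c := by
  induction hd with
  | base hc =>
    rcases hc with hc | hc
    · exact Or.inl hc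
    · exact Or.inr (Deriv.base hc)
  | @step c1 c2 r v _ _ hres hnt ih1 ih2 =>
    obtain ⟨h1, h2, hr⟩ := hres
    have hnF : ∀ c ∈ (↑F : Set Clause), Lit.negate l ∉ c := fun c hc => hneg c hc
    rcases ih1 with rfl | hD1
    · -- c1 = {l}, so l = (v, true)
      have hl : (v, true) = l := Finset.mem_singleton.mp h1
      have hneg2 : Lit.negate l = (v, false) := by
        rw [← hl]; rfl
      rcases ih2 with rfl | hD2
      · have : (v, false) = l := Finset.mem_singleton.mp h2
        rw [← hl] at this
        simp at this
      · exact absurd (hneg2 ▸ h2) (deriv_noNeg hnF hD2)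
    · rcases ih2 with rfl | hD2
      · have hl : (v, false) = l := Finset.mem_singleton.mp h2
        have hneg1 : Lit.negate l = (v, true) := by
          rw [← hl]; rfl
        exact absurd (hneg1 ▸ h1) (deriv_noNeg hnF hD1)
      · exact Or.inr (Deriv.step hD1 hD2 ⟨h1, h2, hr⟩ hnt)

/-- If `¬l` does not occur in `F` and the unit clause `{l}` is not in `F`, then
`{l}` is superredundant in `F ∪ {l}` iff `F ⊨ l`. -/
theorem stmt17 (F : Cnf) (l : Lit)
    (hNT : ∀ c ∈ F, ¬ ClTaut c)
    (hneg : ∀ c ∈ F, Lit.negate l ∉ c)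
    (hnotin : ({l} : Clause) ∉ F) :
    superRedundant (insert ({l} : Clause) F) ({l} : Clause) ↔
      setEntails (↑F) ({l} : Clause) := by
  unfold superRedundant
  rw [Finset.coe_insert]
  constructor
  · intro h M hMF
    apply h M
    intro c hc
    obtain ⟨hcR, hcne⟩ := hc
    rcases deriv_split hneg hcR with rfl | hD
    · exact absurd rfl hcne
    · exact deriv_sound hMF hD
  · intro h M hM
    apply h M
    intro c hc
    refine hM c ⟨Deriv.base (Set.mem_insert_iff.mpr (Or.inr hc)), ?_⟩
    intro heq
    exact hnotin (by simpa using heq ▸ hc)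
end
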